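/- arXiv:1110.2977 — 3 statements merged into one kernel-verified Lean document; each statement's English description precedes it below -/
import Mathlib

section
/- Let f: G^{n+1} → A be a homogeneous group n-cocycle (df = 0, f equivariant). Define for p+q = n-1 the cochains ψ^{p,q}(x̄, ȳ) = (-1)^p f(x̄, ȳ) ∈ A^{p,q}(G,A) (identifying G^{p+1} × G^{q+1} ≅ G^{n+1}). Then d_v ψ^{p,q} = d_h ψ^{p-1,q+1} for 1 ≤ p ≤ n-1, and the total differential of Σ_{p+q=n-1} (-1)^p ψ^{p,q} in the total complex equals j_v^n(f) - j_h^n(f), where j_v^n(f)(x̄, y_0) = f(x̄) viewed in A^{n,0} and j_h^n(f)(x_0, ȳ) = f(ȳ) viewed in A^{0,n}. -/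
/-- The horizontal differential of the double complex
`A^{p,q}(G,A) = Map(G^{p+1} × G^{q+1}, A)`. -/
def dH {G : Type*} {A : Type*} [AddCommGroup A] (p q : ℕ)
    (f : (Fin (p + 1) → G) × (Fin (q + 1) → G) → A) :
    (Fin (p + 2) → G) × (Fin (q + 1) → G) → A :=
  fun xy => ∑ i : Fin (p + 2),
    ((-1 : ℤ) ^ (i : ℕ)) • f (fun j => xy.1 (i.succAbove j), xy.2)

/-- The vertical differential of the double complex, with the sign `(-1)^p`. -/
def dV {G : Type*} {A : Type*} [AddCommGroup A] (p q : ℕ)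
    (f : (Fin (p + 1) → G) × (Fin (q + 1) → G) → A) :
    (Fin (p + 1) → G) × (Fin (q + 2) → G) → A :=
  fun xy => ((-1 : ℤ) ^ p) • ∑ i : Fin (q + 2),
    ((-1 : ℤ) ^ (i : ℕ)) • f (xy.1, fun j => xy.2 (i.succAbove j))

/-- The simplicial differential of the standard cochain complex. -/
def stdDiff (G : Type*) (A : Type*) [AddCommGroup A] (n : ℕ)
    (f : (Fin (n + 1) → G) → A) : (Fin (n + 2) → G) → A :=
  fun g => ∑ i : Fin (n + 2), ((-1 : ℤ) ^ (i : ℕ)) • f (fun j => g (i.succAbove j))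

/-- The action of `G` on cochains: `(g.f)(g₀,…,g_p) = g.(f(g⁻¹g₀,…,g⁻¹g_p))`. -/
def cochainAct {G : Type*} [Group G] {A : Type*} [AddCommGroup A] [DistribMulAction G A]
    (p : ℕ) (g : G) (f : (Fin (p + 1) → G) → A) : (Fin (p + 1) → G) → A :=
  fun x => g • f (fun i => g⁻¹ * x i)

/-- The cochain `ψ^{p,q}(x̄,ȳ) = (-1)^p f(x̄,ȳ)` in `A^{p,q}(G,A)` obtained from
an `n`-cochain `f` via the identification `G^{p+1} × G^{q+1} ≅ G^{n+1}`
(for `p + q = n - 1`). -/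
def psiPQ {G : Type*} {A : Type*} [AddCommGroup A] {n : ℕ}
    (f : (Fin (n + 1) → G) → A) (p q : ℕ) (hpq : p + 1 + (q + 1) = n + 1) :
    (Fin (p + 1) → G) × (Fin (q + 1) → G) → A :=
  fun xy => ((-1 : ℤ) ^ p) • f (fun k => Fin.append xy.1 xy.2 (Fin.cast hpq.symm k))

/-- The vertical augmentation `j_v(f)(x̄, y₀) = f(x̄)` into bidegree `(n,0)`. -/
def jV {G : Type*} {A : Type*} {n : ℕ} (f : (Fin (n + 1) → G) → A) :
    (Fin (n + 1) → G) × (Fin 1 → G) → A := fun xy => f xy.1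

/-- The horizontal augmentation `j_h(f)(x₀, ȳ) = f(ȳ)` into bidegree `(0,n)`. -/
def jH {G : Type*} {A : Type*} {n : ℕ} (f : (Fin (n + 1) → G) → A) :
    (Fin 1 → G) × (Fin (n + 1) → G) → A := fun xy => f xy.2

lemma append_def {α : Type*} {a b : ℕ} (x : Fin a → α) (y : Fin b → α) (k : Fin (a + b)) :
    Fin.append x y k =
      if h : (k : ℕ) < a then x ⟨k, h⟩ else y ⟨(k : ℕ) - a, by omega⟩ := by
  rcases Nat.lt_or_ge (k : ℕ) a with h | h
  · rw [dif_pos h]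
    have : k = Fin.castAdd b ⟨↑k, h⟩ := Fin.ext rfl
    conv_lhs => rw [this]
    exact Fin.append_left x y _
  · rw [dif_neg (not_lt.2 h)]
    have : k = Fin.natAdd a ⟨(k : ℕ) - a, by omega⟩ := Fin.ext (by simp; omega)
    conv_lhs => rw [this]
    exact Fin.append_right x y _

lemma val_succAbove {n : ℕ} (i : Fin (n + 1)) (j : Fin n) :
    ((i.succAbove j : Fin (n + 1)) : ℕ) = if (j : ℕ) < (i : ℕ) then (j : ℕ) else (j : ℕ) + 1 := by
  rw [Fin.succAbove]
  have : (j.castSucc < i) ↔ ((j : ℕ) < (i : ℕ)) := by simp [Fin.lt_def]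
  split_ifs with h1 h2 h2 <;> simp_all [Fin.val_succ, Fin.coe_castSucc]

lemma key1 {α : Type*} {a b m : ℕ} (ha : a + 1 + (b + 1) = m + 3) (hx : a + (b + 1) = m + 2)
    (x : Fin (a + 1) → α) (y : Fin (b + 1) → α) (i : Fin (a + 1)) (k : Fin (m + 2)) :
    Fin.append x y (Fin.cast ha.symm ((Fin.cast ha (Fin.castAdd (b + 1) i)).succAbove k)) =
    Fin.append (fun j => x (i.succAbove j)) y (Fin.cast hx.symm k) := by
  have hi := i.isLt
  have hk := k.isLt
  have hval : ((Fin.cast ha.symm ((Fin.cast ha (Fin.castAdd (b + 1) i)).succAbove k)) : ℕ) =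
      if (k : ℕ) < (i : ℕ) then (k : ℕ) else (k : ℕ) + 1 := by
    simp [val_succAbove]
  rw [append_def, append_def]
  simp only [hval, Fin.coe_cast]
  rcases Nat.lt_or_ge (k : ℕ) (i : ℕ) with h1 | h1
  · simp only [if_pos h1]
    rw [dif_pos (show (k : ℕ) < a + 1 by omega), dif_pos (show (k : ℕ) < a by omega)]
    exact congr_arg x (Fin.ext (by simp only [val_succAbove, Fin.val_mk]; split_ifs <;> omega))
  · simp only [if_neg (not_lt.2 h1)]
    rcases Nat.lt_or_ge (k : ℕ) a with h2 | h2
    · rw [dif_pos (show (k : ℕ) + 1 < a + 1 by omega), dif_pos h2]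
      exact congr_arg x (Fin.ext (by simp only [val_succAbove, Fin.val_mk]; split_ifs <;> omega))
    · rw [dif_neg (by omega), dif_neg (by omega)]
      exact congr_arg y (Fin.ext (by simp only [Fin.val_mk]; omega))

lemma key2 {α : Type*} {a b m : ℕ} (ha : a + 1 + (b + 1) = m + 3) (hy : a + 1 + b = m + 2)
    (x : Fin (a + 1) → α) (y : Fin (b + 1) → α) (j : Fin (b + 1)) (k : Fin (m + 2)) :
    Fin.append x y (Fin.cast ha.symm ((Fin.cast ha (Fin.natAdd (a + 1) j)).succAbove k)) =
    Fin.append x (fun l => y (j.succAbove l)) (Fin.cast hy.symm k) := by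
  have hj := j.isLt
  have hk := k.isLt
  have hval : ((Fin.cast ha.symm ((Fin.cast ha (Fin.natAdd (a + 1) j)).succAbove k)) : ℕ) =
      if (k : ℕ) < a + 1 + (j : ℕ) then (k : ℕ) else (k : ℕ) + 1 := by
    simp [val_succAbove]
  rw [append_def, append_def]
  simp only [hval, Fin.coe_cast]
  rcases Nat.lt_or_ge (k : ℕ) (a + 1) with h1 | h1
  · simp only [if_pos (show (k:ℕ) < a + 1 + (j:ℕ) by omega)]
    rw [dif_pos h1, dif_pos h1]
  · rcases Nat.lt_or_ge (k : ℕ) (a + 1 + (j : ℕ)) with h2 | h2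
    · simp only [if_pos h2]
      rw [dif_neg (by omega), dif_neg (by omega)]
      exact congr_arg y (Fin.ext (by simp only [val_succAbove, Fin.val_mk]; split_ifs <;> omega))
    · simp only [if_neg (not_lt.2 h2)]
      rw [dif_neg (by omega), dif_neg (by omega)]
      exact congr_arg y (Fin.ext (by simp only [val_succAbove, Fin.val_mk]; split_ifs <;> omega))

lemma split_cocycle {G : Type*} {A : Type*} [AddCommGroup A] {m : ℕ}
    (f : (Fin (m + 2) → G) → A) (a b : ℕ) (ha : a + 1 + (b + 1) = m + 3)
    (hx : a + (b + 1) = m + 2) (hy : a + 1 + b = m + 2)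
    (x : Fin (a + 1) → G) (y : Fin (b + 1) → G) :
    stdDiff G A (m + 1) f (fun k => Fin.append x y (Fin.cast ha.symm k)) =
      (∑ i : Fin (a + 1), ((-1 : ℤ) ^ (i : ℕ)) •
        f (fun k => Fin.append (fun j => x (i.succAbove j)) y (Fin.cast hx.symm k))) +
      ((-1 : ℤ) ^ (a + 1)) • ∑ j : Fin (b + 1), ((-1 : ℤ) ^ (j : ℕ)) •
        f (fun k => Fin.append x (fun l => y (j.succAbove l)) (Fin.cast hy.symm k)) := by
  unfold stdDiff
  rw [← Fintype.sum_equiv (finCongr ha)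
    (fun i' : Fin (a + 1 + (b + 1)) => ((-1 : ℤ) ^ ((finCongr ha i' : Fin (m + 3)) : ℕ)) •
      f (fun j => Fin.append x y (Fin.cast ha.symm ((finCongr ha i').succAbove j))))
    (fun i : Fin (m + 3) => ((-1 : ℤ) ^ (i : ℕ)) •
      f (fun j => Fin.append x y (Fin.cast ha.symm (i.succAbove j))))
    (fun _ => rfl)]
  rw [Fin.sum_univ_add]
  congr 1
  · refine Finset.sum_congr rfl fun i _ => ?_
    simp only [finCongr_apply]
    exact congr_arg (fun t => ((-1 : ℤ) ^ ((i : Fin (a + 1)) : ℕ)) • f t)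
      (funext fun k => key1 ha hx x y i k)
  · rw [Finset.smul_sum]
    refine Finset.sum_congr rfl fun j _ => ?_
    simp only [finCongr_apply]
    rw [smul_smul, ← pow_add]
    exact congr_arg (fun t => ((-1 : ℤ) ^ (a + 1 + (j : ℕ))) • f t)
      (funext fun k => key2 ha hy x y j k)

lemma sum_smul_smul {A : Type*} [AddCommGroup A] (c : ℤ) (n : ℕ) (v : Fin n → A) :
    (∑ i : Fin n, ((-1 : ℤ) ^ (i : ℕ)) • (c • v i)) = c • ∑ i : Fin n, ((-1 : ℤ) ^ (i : ℕ)) • v i := by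
  rw [Finset.smul_sum]
  exact Finset.sum_congr rfl fun i _ => smul_comm _ _ _

/-- For a homogeneous group `n`-cocycle `f` (with `n = m + 1 ≥ 1`), the cochains
`ψ^{p,q} = (-1)^p f` with `p + q = n - 1` satisfy `d_v ψ^{p,q} = - d_h ψ^{p-1,q+1}`
for `1 ≤ p ≤ n-1`, `d_h ψ^{n-1,0} = - j_v(f)` and `d_v ψ^{0,n-1} = j_h(f)`.
Hence the total differential of `∑_{p+q=n-1} ψ^{p,q}`, taken with the appropriate
overall sign, equals `j_v(f) - j_h(f)`: the images `j_v(f)` and `j_h(f)` of `f`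
in the total complex are cohomologous. -/
theorem psi_total_coboundary {G : Type*} [Group G] {A : Type*} [AddCommGroup A]
    [DistribMulAction G A] (m : ℕ) (f : (Fin (m + 2) → G) → A)
    (hcoc : stdDiff G A (m + 1) f = 0)
    (heq : ∀ g : G, cochainAct (m + 1) g f = f) :
    (∀ (p q : ℕ) (h1 : p + 1 + 1 + (q + 1) = m + 2) (h2 : p + 1 + (q + 1 + 1) = m + 2),
      dV (p + 1) q (psiPQ f (p + 1) q h1) + dH p (q + 1) (psiPQ f p (q + 1) h2) = 0) ∧
    (∀ h1 : m + 1 + (0 + 1) = m + 2,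
      dH m 0 (psiPQ f m 0 h1) + jV f = 0) ∧
    (∀ h2 : 0 + 1 + (m + 1) = m + 2,
      dV 0 m (psiPQ f 0 m h2) = jH f) := by
  refine ⟨?_, ?_, ?_⟩
  · intro p q h1 h2
    funext xy
    obtain ⟨xv, yv⟩ := xy
    have h0 := split_cocycle f (p + 1) (q + 1) (by omega) h2 h1 xv yv
    rw [hcoc] at h0
    simp only [Pi.zero_apply] at h0
    simp only [Pi.add_apply, Pi.zero_apply, dV, dH, psiPQ]
    rw [sum_smul_smul, sum_smul_smul, smul_smul, ← pow_add]
    have hev : ((-1 : ℤ)) ^ (p + 1 + (p + 1)) = 1 := Even.neg_one_pow ⟨p + 1, by ring⟩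
    rw [hev, one_smul]
    set S1 := ∑ i : Fin (p + 2), ((-1 : ℤ) ^ (i : ℕ)) •
      f (fun k => Fin.append (fun j => xv (i.succAbove j)) yv (Fin.cast h2.symm k)) with hS1
    set S2 := ∑ j : Fin (q + 2), ((-1 : ℤ) ^ (j : ℕ)) •
      f (fun k => Fin.append xv (fun l => yv (j.succAbove l)) (Fin.cast h1.symm k)) with hS2
    have key : ((-1 : ℤ) ^ p) • (S1 + ((-1 : ℤ) ^ (p + 1 + 1)) • S2) = 0 := by
      rw [← h0, smul_zero]
    rw [smul_add, smul_smul, ← pow_add,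
      show ((-1 : ℤ)) ^ (p + (p + 1 + 1)) = 1 from Even.neg_one_pow ⟨p + 1, by ring⟩,
      one_smul] at key
    rw [add_comm] at key
    exact key
  · intro h1
    funext xy
    obtain ⟨xv, yv⟩ := xy
    have hyy : m + 1 + 1 + 0 = m + 2 := by omega
    have h0 := split_cocycle f (m + 1) 0 (by omega) h1 hyy xv yv
    rw [hcoc] at h0
    simp only [Pi.zero_apply] at h0
    have hsum : (∑ j : Fin (0 + 1), ((-1 : ℤ) ^ (j : ℕ)) •
        f (fun k => Fin.append xv (fun l => yv (j.succAbove l)) (Fin.cast hyy.symm k))) = f xv := by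
      rw [Fin.sum_univ_one]
      simp only [Fin.val_zero, pow_zero, one_smul]
      refine congr_arg f (funext fun k => ?_)
      rw [append_def, dif_pos (show ((Fin.cast hyy.symm k : Fin (m + 1 + 1 + 0)) : ℕ) < m + 1 + 1 from k.isLt)]
      exact congr_arg xv (Fin.ext rfl)
    rw [hsum] at h0
    simp only [Pi.add_apply, Pi.zero_apply, dH, psiPQ, jV]
    rw [sum_smul_smul]
    have key : ((-1 : ℤ) ^ m) • ((∑ i : Fin (m + 1 + 1), ((-1 : ℤ) ^ (i : ℕ)) •
        f (fun k => Fin.append (fun j => xv (i.succAbove j)) yv (Fin.cast h1.symm k))) +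
        ((-1 : ℤ) ^ (m + 1 + 1)) • f xv) = 0 := by rw [← h0, smul_zero]
    rw [smul_add, smul_smul, ← pow_add,
      show ((-1 : ℤ)) ^ (m + (m + 1 + 1)) = 1 from Even.neg_one_pow ⟨m + 1, by ring⟩,
      one_smul] at key
    exact key
  · intro h2
    funext xy
    obtain ⟨xv, yv⟩ := xy
    have hxx : 0 + (m + 1 + 1) = m + 2 := by omega
    have h0 := split_cocycle f 0 (m + 1) (by omega) hxx h2 xv yv
    rw [hcoc] at h0
    simp only [Pi.zero_apply] at h0
    have hsum : (∑ i : Fin (0 + 1), ((-1 : ℤ) ^ (i : ℕ)) •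
        f (fun k => Fin.append (fun j => xv (i.succAbove j)) yv (Fin.cast hxx.symm k))) = f yv := by
      rw [Fin.sum_univ_one]
      simp only [Fin.val_zero, pow_zero, one_smul]
      refine congr_arg f (funext fun k => ?_)
      rw [append_def, dif_neg (by simp)]
      exact congr_arg yv (Fin.ext (by simp only [Fin.val_mk, Fin.coe_cast]; omega))
    rw [hsum] at h0
    simp only [dV, psiPQ, jH, pow_zero, one_smul]
    have h0' : f yv + ((-1 : ℤ) ^ (0 + 1)) • (∑ j : Fin (m + 1 + 1), ((-1 : ℤ) ^ (j : ℕ)) •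
        f (fun k => Fin.append xv (fun l => yv (j.succAbove l)) (Fin.cast h2.symm k))) = 0 := h0.symm
    rw [pow_one, neg_one_smul, add_neg_eq_zero] at h0'
    exact h0'.symm
end

section
/- The locally continuous equivariant double complex is closed under the differentials: if f: G^{p+1} × G^{q+1} → A is continuous on G^{p+1} × Γ_U^q for some identity neighbourhood U, then d_h f is continuous on G^{p+2} × Γ_U^q and d_v f is continuous on G^{p+1} × Γ_U^{q+1} (for the same U). -/
/-- The diagonal neighbourhood `Γ_U^q = {(g₀,…,g_q) ∈ G^{q+1} ∣ ∀ i j, g_i⁻¹ g_j ∈ U}`. -/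
def diagNbhd {G : Type*} [Group G] (U : Set G) (q : ℕ) : Set (Fin (q + 1) → G) :=
  {g | ∀ i j, (g i)⁻¹ * g j ∈ U}

/-- The locally continuous double complex is closed under both differentials:
if `f : G^{p+1} × G^{q+1} → A` is continuous on `G^{p+1} × Γ_U^q`, then `d_h f`
is continuous on `G^{p+2} × Γ_U^q` and `d_v f` is continuous on
`G^{p+1} × Γ_U^{q+1}`, for the same identity neighbourhood `U`. -/
theorem lcDoubleComplex_closed_under_differentials {G : Type*} [Group G]
    [TopologicalSpace G] [IsTopologicalGroup G] {A : Type*} [AddCommGroup A]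
    [TopologicalSpace A] [IsTopologicalAddGroup A]
    (U : Set G) (hU : U ∈ nhds (1 : G)) (p q : ℕ)
    (f : (Fin (p + 1) → G) × (Fin (q + 1) → G) → A)
    (hf : ContinuousOn f ((Set.univ : Set (Fin (p + 1) → G)) ×ˢ diagNbhd U q)) :
    ContinuousOn (dH p q f) ((Set.univ : Set (Fin (p + 2) → G)) ×ˢ diagNbhd U q) ∧
    ContinuousOn (dV p q f)
      ((Set.univ : Set (Fin (p + 1) → G)) ×ˢ diagNbhd U (q + 1)) := by
  constructor
  · apply continuousOn_finset_sum
    intro i _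
    apply ContinuousOn.fun_const_smul
    have hc : Continuous (fun xy : (Fin (p + 2) → G) × (Fin (q + 1) → G) =>
        ((fun j => xy.1 (i.succAbove j), xy.2) :
          (Fin (p + 1) → G) × (Fin (q + 1) → G))) := by
      exact (continuous_pi fun j => (continuous_apply _).comp continuous_fst).prodMk
        continuous_snd
    exact hf.comp hc.continuousOn (fun x hx => ⟨trivial, hx.2⟩)
  · apply ContinuousOn.fun_const_smul
    apply continuousOn_finset_sum
    intro i _
    apply ContinuousOn.fun_const_smul
    have hc : Continuous (fun xy : (Fin (p + 1) → G) × (Fin (q + 2) → G) =>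
        ((xy.1, fun j => xy.2 (i.succAbove j)) :
          (Fin (p + 1) → G) × (Fin (q + 1) → G))) := by
      exact continuous_fst.prodMk
        (continuous_pi fun j => (continuous_apply _).comp continuous_snd)
    refine hf.comp hc.continuousOn (fun x hx => ⟨trivial, fun a b => ?_⟩)
    exact hx.2 _ _
end

section
/- The horizontal contracting homotopy preserves equivariance and local continuity: if f ∈ A^{p,q}_{lc}(G,A) is G-equivariant (continuous on G^{p+1} × Γ_U^q for some identity neighbourhood U), then h^p(f)(x_0,...,x_{p-1}, ȳ) := (-1)^p f(x_0,...,x_{p-1}, y_0, ȳ) is again G-equivariant and continuous on G^{p} × Γ_U^q. -/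
/-- The `G`-action on `A^{p,q}(G,A)`:
`(g.f)(x̄,ȳ) = g • f(g⁻¹x̄, g⁻¹ȳ)` (diagonal on arguments, twisted on values). -/
def actPQ {G : Type*} [Group G] {A : Type*} [AddCommGroup A] [DistribMulAction G A]
    {p q : ℕ} (g : G) (f : (Fin (p + 1) → G) × (Fin (q + 1) → G) → A) :
    (Fin (p + 1) → G) × (Fin (q + 1) → G) → A :=
  fun xy => g • f (fun i => g⁻¹ * xy.1 i, fun j => g⁻¹ * xy.2 j)

/-- A cochain in `A^{p,q}(G,A)` is equivariant if it is fixed by the `G`-action. -/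
def EquivariantPQ {G : Type*} [Group G] {A : Type*} [AddCommGroup A] [DistribMulAction G A]
    {p q : ℕ} (f : (Fin (p + 1) → G) × (Fin (q + 1) → G) → A) : Prop :=
  ∀ g : G, actPQ g f = f

/-- The contracting homotopy of the rows:
`(h^{p+1} f)(x₀,…,x_p,ȳ) = (-1)^{p+1} f(x₀,…,x_p,y₀,ȳ)`. -/
def rowHomotopy {G : Type*} {A : Type*} [AddCommGroup A] (p q : ℕ)
    (f : (Fin (p + 2) → G) × (Fin (q + 1) → G) → A) :
    (Fin (p + 1) → G) × (Fin (q + 1) → G) → A :=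
  fun xy => ((-1 : ℤ) ^ (p + 1)) • f (Fin.snoc xy.1 (xy.2 0), xy.2)

/-- The horizontal contracting homotopy preserves equivariance and local
continuity: if `f ∈ A^{p+1,q}_{lc}(G,A)^G` is equivariant and continuous on
`G^{p+2} × Γ_U^q`, then `h(f)` is equivariant and continuous on `G^{p+1} × Γ_U^q`. -/
theorem rowHomotopy_preserves {G : Type*} [Group G] [TopologicalSpace G]
    [IsTopologicalGroup G] {A : Type*} [AddCommGroup A] [TopologicalSpace A]
    [IsTopologicalAddGroup A] [DistribMulAction G A] [ContinuousSMul G A]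
    (U : Set G) (hU : U ∈ nhds (1 : G)) (p q : ℕ)
    (f : (Fin (p + 2) → G) × (Fin (q + 1) → G) → A)
    (heq : EquivariantPQ f)
    (hf : ContinuousOn f ((Set.univ : Set (Fin (p + 2) → G)) ×ˢ diagNbhd U q)) :
    EquivariantPQ (rowHomotopy p q f) ∧
    ContinuousOn (rowHomotopy p q f)
      ((Set.univ : Set (Fin (p + 1) → G)) ×ˢ diagNbhd U q) := by
  constructor
  · intro g
    funext xy
    have h := congrFun (heq g) (Fin.snoc xy.1 (xy.2 0), xy.2)
    simp only [actPQ, rowHomotopy] at h ⊢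
    have hs : (fun i : Fin (p + 2) => g⁻¹ * (Fin.snoc xy.1 (xy.2 0) : Fin (p + 2) → G) i)
        = Fin.snoc (fun i => g⁻¹ * xy.1 i) (g⁻¹ * xy.2 0) := by
      funext i
      induction i using Fin.lastCases <;> simp
    rw [smul_comm, ← hs, h]
  · have hφ : Continuous (fun xy : (Fin (p + 1) → G) × (Fin (q + 1) → G) =>
        ((Fin.snoc xy.1 (xy.2 0) : Fin (p + 2) → G), xy.2)) := by
      refine Continuous.prodMk (continuous_pi fun i => ?_) continuous_snd
      refine Fin.lastCases ?_ ?_ i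
      · simpa using ((continuous_apply (0 : Fin (q + 1))).snd' : Continuous fun xy : (Fin (p + 1) → G) × (Fin (q + 1) → G) => xy.2 0)
      · intro j
        simpa only [Fin.snoc_castSucc] using ((continuous_apply j).fst' : Continuous fun xy : (Fin (p + 1) → G) × (Fin (q + 1) → G) => xy.1 j)
    have hmap : Set.MapsTo (fun xy : (Fin (p + 1) → G) × (Fin (q + 1) → G) =>
        ((Fin.snoc xy.1 (xy.2 0) : Fin (p + 2) → G), xy.2))
        ((Set.univ : Set (Fin (p + 1) → G)) ×ˢ diagNbhd U q)
        ((Set.univ : Set (Fin (p + 2) → G)) ×ˢ diagNbhd U q) := by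
      rintro ⟨x, y⟩ ⟨-, hy⟩
      exact ⟨Set.mem_univ _, hy⟩
    exact (hf.comp hφ.continuousOn hmap).const_smul ((-1 : ℤ) ^ (p + 1))
end
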